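/- Let V be a vertex operator algebra of CFT-type and let X be a set of homogeneous representatives of a spanning set of V/C_1(V). Then V is spanned by elements of the form u^{(1)}_{n_1} ⋯ u^{(r)}_{n_r} 1 with r ∈ ℕ, u^{(i)} ∈ X, n_i ∈ ℤ, and wt(u^{(1)}_{n_1}) ≥ ⋯ ≥ wt(u^{(r)}_{n_r}) > 0. -/

import Mathlib

open scoped BigOperators

namespace VOAPaper

/-- Integer binomial coefficient `C(m, i)` for `m : ℤ`, `i : ℕ`. -/
def zchoose (m : ℤ) (i : ℕ) : ℤ :=
  if 0 ≤ m then ((m.toNat).choose i : ℤ)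
  else (-1) ^ i * ((((i : ℤ) - m - 1).toNat).choose i : ℤ)

variable (V : Type) [AddCommGroup V] [Module ℂ V]

/-- A vertex algebra structure on `V`: modes `u_n`, vacuum, truncation,
vacuum/creation axioms, and the Borcherds (Jacobi) identity. -/
structure VertexAlg where
  mode : V →ₗ[ℂ] ℤ → Module.End ℂ V
  vac : V
  trunc : ∀ u w : V, ∃ N : ℤ, ∀ n : ℤ, N ≤ n → mode u n w = 0
  vac_mode : ∀ (n : ℤ) (w : V), mode vac n w = if n = -1 then w else 0
  creation_neg_one : ∀ u : V, mode u (-1) vac = u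
  creation_nonneg : ∀ (u : V) (n : ℤ), 0 ≤ n → mode u n vac = 0
  borcherds : ∀ (u v w : V) (p q m : ℤ),
    (∑ᶠ i : ℕ, zchoose m i • mode (mode u (p + i) v) (m + q - i) w) =
    (∑ᶠ i : ℕ, ((-1 : ℤ) ^ i * zchoose p i) •
      (mode u (p + m - i) (mode v (q + i) w)
        - (p.negOnePow : ℤ) • mode v (p + q - i) (mode u (m + i) w)))

/-- A vertex operator algebra of CFT-type: a vertex algebra with conformal
vector `ω`, central charge `c`, an `L(0)`-grading `V = ⊕_{n ≥ 0} V_n` with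
`V_0 = ℂ 1`, Virasoro relations, and the `L(-1)`-derivation property. -/
structure VOA extends VertexAlg V where
  ω : V
  c : ℂ
  grading : ℤ → Submodule ℂ V
  internal : DirectSum.IsInternal grading
  neg_bot : ∀ n : ℤ, n < 0 → grading n = ⊥
  L0_eigen : ∀ (n : ℤ) (v : V), v ∈ grading n → mode ω 1 v = (n : ℂ) • v
  vac_grade : vac ∈ grading 0
  cft : grading 0 = Submodule.span ℂ {vac}
  ω_grade : ω ∈ grading 2
  virasoro : ∀ m n : ℤ,
    mode ω (m + 1) * mode ω (n + 1) - mode ω (n + 1) * mode ω (m + 1)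
      = (m - n) • mode ω (m + n + 1)
        + (if m + n = 0 then ((m ^ 3 - m : ℂ) / 12) * c else 0) • (1 : Module.End ℂ V)
  Lneg1_deriv : ∀ (u : V) (n : ℤ), mode (mode ω 0 u) n = (-n) • mode u (n - 1)

/-- A weak module for (the underlying vertex algebra of) `V`. -/
structure WeakMod (A : VertexAlg V) (M : Type) [AddCommGroup M] [Module ℂ M] where
  mmode : V →ₗ[ℂ] ℤ → Module.End ℂ M
  trunc : ∀ (v : V) (w : M), ∃ N : ℤ, ∀ n : ℤ, N ≤ n → mmode v n w = 0
  vac_mode : ∀ (n : ℤ) (w : M), mmode A.vac n w = if n = -1 then w else 0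
  borcherds : ∀ (u v : V) (w : M) (p q m : ℤ),
    (∑ᶠ i : ℕ, zchoose m i • mmode (A.mode u (p + i) v) (m + q - i) w) =
    (∑ᶠ i : ℕ, ((-1 : ℤ) ^ i * zchoose p i) •
      (mmode u (p + m - i) (mmode v (q + i) w)
        - (p.negOnePow : ℤ) • mmode v (p + q - i) (mmode u (m + i) w)))

/-- An ℕ-gradable weak module: a weak module with a compatible
lower-truncated grading `M = ⊕_{n ≥ 0} M(n)`. -/
structure NGradedMod (W : VOA V) (M : Type) [AddCommGroup M] [Module ℂ M]
    extends WeakMod V W.toVertexAlg M where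
  mgrading : ℤ → Submodule ℂ M
  internal : DirectSum.IsInternal mgrading
  neg_bot : ∀ n : ℤ, n < 0 → mgrading n = ⊥
  compat : ∀ (r : ℤ) (v : V), v ∈ W.grading r → ∀ (m n : ℤ), ∀ w ∈ mgrading n,
    mmode v m w ∈ mgrading (n + r - m - 1)

/-- Iterated application of modes: `applyModes [(u¹,n₁),…,(uʳ,nᵣ)] w = u¹_{n₁} ⋯ uʳ_{nᵣ} w`. -/
def applyModes (A : VertexAlg V) : List (V × ℤ) → V → V
  | [], w => w
  | p :: L, w => A.mode p.1 p.2 (applyModes A L w)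

/-- Iterated application of module modes. -/
def applyModesM {M : Type} [AddCommGroup M] [Module ℂ M] {A : VertexAlg V}
    (Mod : WeakMod V A M) : List (V × ℤ) → M → M
  | [], w => w
  | p :: L, w => Mod.mmode p.1 p.2 (applyModesM Mod L w)

/-- The subspace `C_n(V) = span{ u_{-n} v }`. -/
def Cspace (A : VertexAlg V) (n : ℕ) : Submodule ℂ V :=
  Submodule.span ℂ { x | ∃ u v : V, x = A.mode u (-(n : ℤ)) v }

/-- The subspace `C_1(V) = span{ u_{-1} v, L(-1)u : u, v ∈ V_+ }`. -/
def C1space (W : VOA V) : Submodule ℂ V :=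
  Submodule.span ℂ
    ({ x | ∃ u v : V, (∃ r : ℤ, 0 < r ∧ u ∈ W.grading r) ∧
        (∃ r : ℤ, 0 < r ∧ v ∈ W.grading r) ∧ x = W.mode u (-1) v }
      ∪ { x | ∃ u : V, (∃ r : ℤ, 0 < r ∧ u ∈ W.grading r) ∧ x = W.mode W.ω 0 u })

/-- A submodule invariant under all modes. -/
def Invariant {M : Type} [AddCommGroup M] [Module ℂ M] {A : VertexAlg V}
    (Mod : WeakMod V A M) (N : Submodule ℂ M) : Prop :=
  ∀ (v : V) (n : ℤ), ∀ w ∈ N, Mod.mmode v n w ∈ N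

/-- Irreducibility of a weak module. -/
def IsIrreducibleMod {M : Type} [AddCommGroup M] [Module ℂ M] {A : VertexAlg V}
    (Mod : WeakMod V A M) : Prop :=
  (⊤ : Submodule ℂ M) ≠ ⊥ ∧
    ∀ N : Submodule ℂ M, Invariant V Mod N → N = ⊥ ∨ N = ⊤

section KLProof

open scoped DirectSum

variable {V : Type} [AddCommGroup V] [Module ℂ V]

/-! ### Basic facts about `zchoose` -/

lemma zchoose_zero_right (m : ℤ) : zchoose m 0 = 1 := by
  unfold zchoose; split <;> simp

lemma zchoose_zero_left {i : ℕ} (hi : i ≠ 0) : zchoose 0 i = 0 := by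
  unfold zchoose
  rw [if_pos le_rfl]
  have : (0:ℤ).toNat = 0 := rfl
  rw [this, Nat.choose_eq_zero_of_lt (Nat.pos_of_ne_zero hi)]
  simp

lemma zchoose_one_left {i : ℕ} (hi : 2 ≤ i) : zchoose 1 i = 0 := by
  unfold zchoose
  rw [if_pos (by norm_num)]
  have h1 : (1:ℤ).toNat = 1 := rfl
  rw [h1, Nat.choose_eq_zero_of_lt (by omega)]
  simp

lemma zchoose_neg_one (i : ℕ) : zchoose (-1) i = (-1) ^ i := by
  unfold zchoose
  rw [if_neg (by norm_num)]
  have : ((i : ℤ) - (-1) - 1).toNat = i := by omega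
  rw [this, Nat.choose_self]
  ring

/-! ### Finite support helpers -/

lemma support_finite_of_bound {α : Type} [Zero α] {f : ℕ → α} (N : ℕ)
    (h : ∀ i, N ≤ i → f i = 0) : (Function.support f).Finite := by
  apply Set.Finite.subset (Set.finite_Iio N)
  intro i hi
  simp only [Set.mem_Iio]
  by_contra hc
  exact hi (h i (by omega))

variable (W : VOA V)

lemma mode_shift_bound (u w : V) (c : ℤ) :
    ∃ N : ℕ, ∀ i : ℕ, N ≤ i → W.mode u (c + i) w = 0 := by
  obtain ⟨N, hN⟩ := W.trunc u w
  exact ⟨(N - c).toNat, fun i hi => hN _ (by omega)⟩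

/-! ### Specializations of the Borcherds identity -/

/-- Commutator formula: `u_c v_d w = v_d u_c w + ∑ᶠ i, C(c,i) (u_i v)_{c+d-i} w`. -/
lemma comm_formula (u v w : V) (c d : ℤ) :
    W.mode u c (W.mode v d w)
      = W.mode v d (W.mode u c w)
        + ∑ᶠ i : ℕ, zchoose c i • W.mode (W.mode u (0 + i) v) (c + d - i) w := by
  have hb := W.borcherds u v w 0 d c
  have hr : (∑ᶠ i : ℕ, ((-1:ℤ)^i * zchoose 0 i) •
      (W.mode u (0 + c - i) (W.mode v (d + i) w)
        - ((0:ℤ).negOnePow : ℤ) • W.mode v (0 + d - i) (W.mode u (c + i) w)))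
      = W.mode u c (W.mode v d w) - W.mode v d (W.mode u c w) := by
    rw [finsum_eq_single _ 0 (fun i hi => by rw [zchoose_zero_left hi]; simp)]
    norm_num [Int.negOnePow_zero, zchoose_zero_right]
  rw [hr] at hb
  have := sub_eq_iff_eq_add.mp hb.symm
  rw [this]; abel

/-- Iterate formula for `(u_{-1}v)_q`. -/
lemma iterate_formula (u v w : V) (q : ℤ) :
    W.mode (W.mode u (-1) v) q w
      = (∑ᶠ i : ℕ, W.mode u (-1 - i) (W.mode v (q + i) w))
        + ∑ᶠ i : ℕ, W.mode v (q - 1 - i) (W.mode u i w) := by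
  have hb := W.borcherds u v w (-1) q 0
  have hl : (∑ᶠ i : ℕ, zchoose 0 i • W.mode (W.mode u (-1 + i) v) (0 + q - i) w)
      = W.mode (W.mode u (-1) v) q w := by
    rw [finsum_eq_single _ 0 (fun i hi => by rw [zchoose_zero_left hi]; simp)]
    norm_num [zchoose_zero_right]
  rw [hl] at hb
  have hcoef : ∀ i : ℕ, ((-1:ℤ)^i * zchoose (-1) i) •
      (W.mode u (-1 + 0 - i) (W.mode v (q + i) w)
        - ((-1:ℤ).negOnePow : ℤ) • W.mode v (-1 + q - i) (W.mode u (0 + i) w))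
      = W.mode u (-1 - i) (W.mode v (q + i) w)
        + W.mode v (q - 1 - i) (W.mode u i w) := by
    intro i
    rw [zchoose_neg_one]
    have h1 : ((-1:ℤ)^i * (-1:ℤ)^i) = 1 := by
      rw [← pow_add]; exact (neg_one_pow_eq_one_iff_even (by norm_num)).mpr ⟨i, rfl⟩
    have h2 : (((-1:ℤ).negOnePow : ℤ)) = -1 := by norm_num
    rw [h2]
    have e1 : (-1 + 0 - (i:ℤ)) = -1 - i := by ring
    have e2 : (-1 + q - (i:ℤ)) = q - 1 - i := by ring
    have e3 : ((0:ℤ) + i) = i := by ring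
    rw [e1, e2, e3] ; rw [h1, one_smul] ; rw [neg_one_smul, sub_neg_eq_add]
  rw [finsum_congr hcoef] at hb
  obtain ⟨N1, hN1⟩ := mode_shift_bound W v w q
  obtain ⟨N2, hN2⟩ := mode_shift_bound W u w 0
  have hfin1 : (Function.support fun i : ℕ =>
      W.mode u (-1 - i) (W.mode v (q + i) w)).Finite := by
    apply support_finite_of_bound N1
    intro i hi
    rw [hN1 i hi, map_zero]
  have hfin2 : (Function.support fun i : ℕ =>
      W.mode v (q - 1 - i) (W.mode u i w)).Finite := by
    apply support_finite_of_bound N2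
    intro i hi
    have := hN2 i hi
    rw [zero_add] at this
    rw [this, map_zero]
  rw [finsum_add_distrib hfin1 hfin2] at hb
  exact hb


/-! ### `L(0)`-commutator and grading shift -/

lemma L0_mode {a w : V} {s t : ℤ} (ha : a ∈ W.grading s) (hw : w ∈ W.grading t) (c : ℤ) :
    W.mode W.ω 1 (W.mode a c w) = ((s + t - c - 1 : ℤ) : ℂ) • W.mode a c w := by
  have h := comm_formula W W.ω a w 1 c
  have hsum : (∑ᶠ i : ℕ, zchoose 1 i • W.mode (W.mode W.ω (0 + i) a) (1 + c - i) w)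
      = W.mode (W.mode W.ω 0 a) (1 + c) w + W.mode (W.mode W.ω 1 a) c w := by
    rw [finsum_eq_finset_sum_of_support_subset _ (s := ({0, 1} : Finset ℕ)) ?hs]
    · rw [Finset.sum_insert (by norm_num), Finset.sum_singleton]
      have c0 : zchoose 1 0 = 1 := zchoose_zero_right 1
      have c1 : zchoose 1 1 = 1 := by unfold zchoose; norm_num
      rw [c0, c1, one_smul, one_smul]
      norm_num
    · intro i hi
      simp only [Function.mem_support, ne_eq, not_not] at hi ⊢
      by_contra hne
      have h2 : 2 ≤ i := by
        rcases Nat.lt_or_ge i 2 with h | h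
        · interval_cases i <;> simp_all
        · exact h
      rw [zchoose_one_left h2, zero_smul] at hi
      exact hi rfl
  rw [hsum] at h
  have hd : W.mode (W.mode W.ω 0 a) (1 + c) w = (-(1 + c)) • W.mode a c w := by
    have e : (1 + c - 1) = c := by ring
    rw [W.Lneg1_deriv a (1 + c), e, LinearMap.smul_apply]
  have he : W.mode (W.mode W.ω 1 a) c w = (s : ℂ) • W.mode a c w := by
    rw [W.L0_eigen s a ha, map_smul]
    rfl
  have hw' : W.mode a c (W.mode W.ω 1 w) = (t : ℂ) • W.mode a c w := by
    rw [W.L0_eigen t w hw, map_smul]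
  rw [hd, he, hw'] at h
  rw [h]
  have hz : (-(1 + c)) • (W.mode a c w) = ((-(1+c) : ℤ) : ℂ) • (W.mode a c w) :=
    (Int.cast_smul_eq_zsmul ℂ _ _).symm
  rw [hz, ← add_smul, ← add_smul]
  congr 1
  push_cast
  ring

/-! ### Decomposition machinery -/

noncomputable def gEquiv : (⨁ j : ℤ, W.grading j) ≃ₗ[ℂ] V :=
  LinearEquiv.ofBijective (DirectSum.coeLinearMap W.grading) W.internal

lemma gEquiv_lof (j : ℤ) (x : W.grading j) :
    gEquiv W (DirectSum.lof ℂ ℤ (fun j => W.grading j) j x) = (x : V) := by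
  unfold gEquiv
  show DirectSum.coeLinearMap W.grading (DirectSum.lof ℂ ℤ (fun j => W.grading j) j x) = (x : V)
  exact DirectSum.coeLinearMap_of W.grading j x

lemma gEquiv_symm_of_mem {x : V} {j : ℤ} (hx : x ∈ W.grading j) :
    (gEquiv W).symm x = DirectSum.lof ℂ ℤ (fun j => W.grading j) j ⟨x, hx⟩ := by
  rw [LinearEquiv.symm_apply_eq, gEquiv_lof]

/-- Any `L(0)`-eigenvector with integral eigenvalue `k` lies in `grading k`. -/
lemma eigen_mem {x : V} {k : ℤ} (hx : W.mode W.ω 1 x = (k : ℂ) • x) :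
    x ∈ W.grading k := by
  classical
  set D : V →ₗ[ℂ] V := W.mode W.ω 1 - (k : ℂ) • LinearMap.id with hD
  set diag : (⨁ j : ℤ, W.grading j) →ₗ[ℂ] (⨁ j : ℤ, W.grading j) :=
    DirectSum.toModule ℂ ℤ _ (fun j => (DirectSum.lof ℂ ℤ (fun j => W.grading j) j).comp
      (((j : ℂ) - (k : ℂ)) • LinearMap.id)) with hdiag
  have key : D.comp ((gEquiv W) : (⨁ j : ℤ, W.grading j) →ₗ[ℂ] V)
      = ((gEquiv W) : (⨁ j : ℤ, W.grading j) →ₗ[ℂ] V).comp diag := by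
    apply DirectSum.linearMap_ext
    intro j
    apply LinearMap.ext
    intro y
    simp only [LinearMap.comp_apply, LinearEquiv.coe_coe]
    rw [hdiag]
    rw [DirectSum.toModule_lof]
    simp only [LinearMap.comp_apply, LinearMap.smul_apply, LinearMap.id_apply]
    rw [gEquiv_lof, gEquiv_lof]
    rw [hD]
    simp only [LinearMap.sub_apply, LinearMap.smul_apply, LinearMap.id_apply]
    rw [W.L0_eigen j (y : V) y.2]
    rw [Submodule.coe_smul]
    rw [sub_smul]
  set f := (gEquiv W).symm x with hf
  have hDx : D x = 0 := by
    rw [hD]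
    simp only [LinearMap.sub_apply, LinearMap.smul_apply, LinearMap.id_apply]
    rw [hx, sub_self]
  have h0 : (gEquiv W) (diag f) = 0 := by
    have := congrArg (fun φ => φ f) key
    simp only [LinearMap.comp_apply, LinearEquiv.coe_coe] at this
    rw [LinearEquiv.apply_symm_apply] at this
    rw [← this, hDx]
  have hdf : diag f = 0 := by
    have := (gEquiv W).map_eq_zero_iff.mp h0
    exact this
  -- componentwise: for every j, ((j:ℂ) - k) • f j = 0
  have hcomp : ∀ j : ℤ, ((j : ℂ) - (k : ℂ)) • (f j) = 0 := by
    intro j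
    have lemj : ∀ g : (⨁ j : ℤ, W.grading j), (diag g) j = ((j : ℂ) - (k : ℂ)) • (g j) := by
      intro g
      induction g using DirectSum.induction_on with
      | zero => simp
      | of i y =>
        rw [hdiag]
        have : (DirectSum.of (fun j => W.grading j) i) y
            = DirectSum.lof ℂ ℤ (fun j => W.grading j) i y := rfl
        rw [this, DirectSum.toModule_lof]
        simp only [LinearMap.comp_apply, LinearMap.smul_apply, LinearMap.id_apply]
        by_cases hij : i = j
        · subst hij
          rw [DirectSum.lof_apply, DirectSum.lof_apply]
        · rw [← this]
          rw [DirectSum.of_eq_of_ne _ _ _ (Ne.symm hij)]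
          have : (DirectSum.lof ℂ ℤ (fun j => W.grading j) i) (((i:ℂ) - (k:ℂ)) • y)
              = DirectSum.of (fun j => W.grading j) i (((i:ℂ) - (k:ℂ)) • y) := rfl
          rw [this, DirectSum.of_eq_of_ne _ _ _ (Ne.symm hij), smul_zero]
      | add g1 g2 ih1 ih2 =>
        rw [map_add, DirectSum.add_apply, ih1, ih2, DirectSum.add_apply, smul_add]
    rw [← lemj f, hdf]
    simp
  have hfj : ∀ j : ℤ, j ≠ k → f j = 0 := by
    intro j hj
    have := hcomp j
    rcases smul_eq_zero.mp this with h | h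
    · exfalso
      apply hj
      have : (j : ℂ) = (k : ℂ) := by linear_combination h
      exact_mod_cast this
    · exact h
  have hfs : f = DirectSum.lof ℂ ℤ (fun j => W.grading j) k (f k) := by
    apply DFinsupp.ext
    intro j
    by_cases hj : j = k
    · subst hj
      rw [DirectSum.lof_apply]
    · rw [hfj j hj]
      have : (DirectSum.lof ℂ ℤ (fun j => W.grading j) k) (f k)
          = DirectSum.of (fun j => W.grading j) k (f k) := rfl
      rw [this, DirectSum.of_eq_of_ne _ _ _ hj]
  have : x = ((f k) : V) := by
    conv_lhs => rw [← (gEquiv W).apply_symm_apply x, ← hf, hfs, gEquiv_lof]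
  rw [this]
  exact (f k).2

/-- Modes shift the grading. -/
lemma mode_mem_grading {a w : V} {s t : ℤ} (ha : a ∈ W.grading s) (hw : w ∈ W.grading t)
    (c : ℤ) : W.mode a c w ∈ W.grading (s + t - c - 1) :=
  eigen_mem W (L0_mode W ha hw c)

/-! ### Projections -/

noncomputable def gProj (k : ℤ) : V →ₗ[ℂ] V :=
  (W.grading k).subtype ∘ₗ (DirectSum.component ℂ ℤ (fun j => W.grading j) k)
    ∘ₗ ((gEquiv W).symm : V →ₗ[ℂ] (⨁ j : ℤ, W.grading j))

lemma gProj_of_mem {x : V} {j : ℤ} (hx : x ∈ W.grading j) (k : ℤ) :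
    gProj W k x = if j = k then x else 0 := by
  unfold gProj
  simp only [LinearMap.comp_apply, LinearEquiv.coe_coe]
  rw [gEquiv_symm_of_mem W hx]
  by_cases hjk : j = k
  · subst hjk
    rw [if_pos rfl]
    rw [DirectSum.component.lof_self]
    rfl
  · rw [if_neg hjk]
    rw [DirectSum.component.of]
    rw [dif_neg hjk]
    exact map_zero _

lemma grading_unique {x : V} {j k : ℤ} (h1 : x ∈ W.grading j) (h2 : x ∈ W.grading k)
    (hjk : j ≠ k) : x = 0 := by
  have a1 := gProj_of_mem W h1 k
  have a2 := gProj_of_mem W h2 k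
  rw [if_neg hjk] at a1
  rw [if_pos rfl] at a2
  rw [a1] at a2
  exact a2.symm

lemma proj_span_mem {Y : Set V} (hY : ∀ y ∈ Y, ∃ j, y ∈ W.grading j) (k : ℤ) {a : V}
    (ha : a ∈ Submodule.span ℂ Y) :
    gProj W k a ∈ Submodule.span ℂ {y | y ∈ Y ∧ y ∈ W.grading k} := by
  have hle : Submodule.span ℂ Y ≤ (Submodule.span ℂ {y | y ∈ Y ∧ y ∈ W.grading k}).comap (gProj W k) := by
    rw [Submodule.span_le]
    intro y hy
    obtain ⟨j, hj⟩ := hY y hy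
    simp only [SetLike.mem_coe, Submodule.mem_comap]
    rw [gProj_of_mem W hj k]
    by_cases hjk : j = k
    · rw [if_pos hjk]
      apply Submodule.subset_span
      exact ⟨hy, by rw [← hjk]; exact hj⟩
    · rw [if_neg hjk]
      exact Submodule.zero_mem _
  exact hle ha

/-! ### Monomial lists -/

/-- Entry: (element, recorded grading, mode index). -/
abbrev KLEntry (V : Type) := V × ℤ × ℤ

/-- Mode weight of an entry. -/
def mwtE (p : KLEntry V) : ℤ := p.2.1 - p.2.2 - 1

def mEval : List (KLEntry V) → V
  | [] => W.vac
  | p :: L => W.mode p.1 p.2.2 (mEval L)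

def mEnd : List (KLEntry V) → Module.End ℂ V
  | [] => 1
  | p :: L => W.mode p.1 p.2.2 * mEnd L

lemma mEval_eq (L : List (KLEntry V)) : mEval W L = mEnd W L W.vac := by
  induction L with
  | nil => rfl
  | cons p L ih => simp only [mEval, mEnd, Module.End.mul_apply, ih]

lemma mEnd_append (A B : List (KLEntry V)) : mEnd W (A ++ B) = mEnd W A * mEnd W B := by
  induction A with
  | nil => simp [mEnd]
  | cons p A ih =>
    simp only [List.cons_append, mEnd, mul_assoc]
    rw [ih]

lemma mEval_append (A B : List (KLEntry V)) :
    mEval W (A ++ B) = mEnd W A (mEval W B) := by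
  rw [mEval_eq, mEnd_append, Module.End.mul_apply, ← mEval_eq]

lemma mEval_zero_entry (L : List (KLEntry V)) (h : ∃ p ∈ L, p.1 = 0) :
    mEval W L = 0 := by
  induction L with
  | nil => simp at h
  | cons p L ih =>
    obtain ⟨q, hq, hq0⟩ := h
    rcases List.mem_cons.mp hq with h1 | h2
    · subst h1
      rw [mEval, hq0, map_zero]
      rfl
    · rw [mEval, ih ⟨q, h2, hq0⟩, map_zero]

lemma mEval_applyModes (L : List (KLEntry V)) :
    applyModes V W.toVertexAlg (L.map fun p => (p.1, p.2.2)) W.vac = mEval W L := by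
  induction L with
  | nil => rfl
  | cons p L ih => simp only [List.map_cons, applyModes, mEval, ih]

@[simp] lemma entry_fst (x : V) (s c : ℤ) : ((x, s, c) : KLEntry V).1 = x := rfl
@[simp] lemma entry_snd_fst (x : V) (s c : ℤ) : ((x, s, c) : KLEntry V).2.1 = s := rfl
@[simp] lemma entry_snd_snd (x : V) (s c : ℤ) : ((x, s, c) : KLEntry V).2.2 = c := rfl

/-! ### Measures -/

def gammaM (L : List (KLEntry V)) : ℕ := (L.map fun p => p.2.1.toNat).sum

def fiveM (L : List (KLEntry V)) : ℕ := (L.map fun p => 5 ^ p.2.1.toNat).sum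

open Classical in
noncomputable def nxM (X : Set V) (L : List (KLEntry V)) : ℕ :=
  L.countP (fun p => decide (p.1 ∉ X))

def invM : List (KLEntry V) → ℕ
  | [] => 0
  | p :: L => L.countP (fun q => decide (mwtE p < mwtE q)) + invM L

@[simp] lemma gammaM_nil : gammaM ([] : List (KLEntry V)) = 0 := rfl
@[simp] lemma gammaM_cons (p : KLEntry V) (L) : gammaM (p :: L) = p.2.1.toNat + gammaM L := rfl
lemma gammaM_append (A B : List (KLEntry V)) : gammaM (A ++ B) = gammaM A + gammaM B := by
  unfold gammaM; rw [List.map_append, List.sum_append]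
@[simp] lemma fiveM_nil : fiveM ([] : List (KLEntry V)) = 0 := rfl
@[simp] lemma fiveM_cons (p : KLEntry V) (L) : fiveM (p :: L) = 5 ^ p.2.1.toNat + fiveM L := rfl
lemma fiveM_append (A B : List (KLEntry V)) : fiveM (A ++ B) = fiveM A + fiveM B := by
  unfold fiveM; rw [List.map_append, List.sum_append]
open Classical in
lemma nxM_append (X : Set V) (A B : List (KLEntry V)) : nxM X (A ++ B) = nxM X A + nxM X B := by
  unfold nxM; rw [List.countP_append]
open Classical in
lemma nxM_cons (X : Set V) (p : KLEntry V) (L) :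
    nxM X (p :: L) = nxM X L + (if p.1 ∉ X then 1 else 0) := by
  unfold nxM; rw [List.countP_cons]; simp

lemma invM_cons (p : KLEntry V) (L) :
    invM (p :: L) = L.countP (fun q => decide (mwtE p < mwtE q)) + invM L := rfl

lemma invM_swap (A : List (KLEntry V)) (p q : KLEntry V) (B : List (KLEntry V))
    (h : mwtE p < mwtE q) :
    invM (A ++ q :: p :: B) < invM (A ++ p :: q :: B) := by
  induction A with
  | nil =>
    simp only [List.nil_append, invM_cons, List.countP_cons]
    have h1 : decide (mwtE p < mwtE q) = true := by simpa using h
    have h2 : decide (mwtE q < mwtE p) = false := by simp; omega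
    rw [h1, h2]
    simp
    omega
  | cons r A ih =>
    simp only [List.cons_append, invM_cons]
    have hcnt : (A ++ q :: p :: B).countP (fun x => decide (mwtE r < mwtE x))
        = (A ++ p :: q :: B).countP (fun x => decide (mwtE r < mwtE x)) := by
      rw [List.countP_append, List.countP_append, List.countP_cons, List.countP_cons,
        List.countP_cons, List.countP_cons]
      omega
    omega

/-! ### Structural search helpers -/

lemma exists_bad_pair (L : List (KLEntry V))
    (h : ¬ L.Chain' (fun p q => mwtE q ≤ mwtE p)) :
    ∃ A p q B, L = A ++ p :: q :: B ∧ mwtE p < mwtE q := by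
  induction L with
  | nil => exact absurd List.isChain_nil h
  | cons x L ih =>
    match L, ih with
    | [], _ => exact absurd (List.isChain_singleton x) h
    | y :: t, ih =>
      by_cases hxy : mwtE y ≤ mwtE x
      · have : ¬ (y :: t).Chain' (fun p q => mwtE q ≤ mwtE p) := by
          intro hc
          exact h (List.isChain_cons_cons.mpr ⟨hxy, hc⟩)
        obtain ⟨A, p, q, B, hL, hpq⟩ := ih this
        exact ⟨x :: A, p, q, B, by rw [hL]; rfl, hpq⟩
      · exact ⟨[], x, y, t, rfl, by omega⟩

lemma exists_nonX (X : Set V) (L : List (KLEntry V)) (h : ¬ ∀ p ∈ L, p.1 ∈ X) :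
    ∃ A p B, L = A ++ p :: B ∧ p.1 ∉ X := by
  induction L with
  | nil => exact absurd (by simp) h
  | cons x L ih =>
    by_cases hx : x.1 ∈ X
    · have : ¬ ∀ p ∈ L, p.1 ∈ X := by
        intro hall
        apply h
        intro p hp
        rcases List.mem_cons.mp hp with h1 | h2
        · rw [h1]; exact hx
        · exact hall p h2
      obtain ⟨A, p, B, hL, hp⟩ := ih this
      exact ⟨x :: A, p, B, by rw [hL]; rfl, hp⟩
    · exact ⟨[], x, L, rfl, hx⟩

lemma finsum_mem_submodule {f : ℕ → V} (T : Submodule ℂ V) (h : ∀ i, f i ∈ T) :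
    ∑ᶠ i : ℕ, f i ∈ T := by
  by_cases hf : (Function.support f).Finite
  · rw [finsum_eq_sum f hf]
    exact Submodule.sum_mem T (fun i _ => h i)
  · rw [finsum_of_infinite_support hf]
    exact Submodule.zero_mem T

/-! ### Spanning set decomposition -/

def C1genSet (W : VOA V) : Set V :=
  ({ x | ∃ u v : V, (∃ r : ℤ, 0 < r ∧ u ∈ W.grading r) ∧
      (∃ r : ℤ, 0 < r ∧ v ∈ W.grading r) ∧ x = W.mode u (-1) v }
    ∪ { x | ∃ u : V, (∃ r : ℤ, 0 < r ∧ u ∈ W.grading r) ∧ x = W.mode W.ω 0 u })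

lemma C1space_eq : C1space V W = Submodule.span ℂ (C1genSet W) := rfl

lemma C1gen_homog : ∀ y ∈ C1genSet W, ∃ j, y ∈ W.grading j := by
  rintro y (⟨u, v, ⟨r, _, hu⟩, ⟨r', _, hv⟩, rfl⟩ | ⟨u, ⟨r, _, hu⟩, rfl⟩)
  · exact ⟨r + r' - (-1) - 1, mode_mem_grading W hu hv (-1)⟩
  · exact ⟨2 + r - 0 - 1, mode_mem_grading W W.ω_grade hu 0⟩

lemma top_union (X : Set V)
    (hspan : Submodule.span ℂ ((C1space V W).mkQ '' X) = ⊤) :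
    Submodule.span ℂ (X ∪ C1genSet W) = ⊤ := by
  rw [Submodule.span_union, ← C1space_eq, sup_comm, ← Submodule.map_mkQ_eq_top,
    ← Submodule.span_image]
  exact hspan

lemma top_split (X : Set V)
    (hhom' : ∀ y ∈ X, ∃ j, y ∈ W.grading j)
    (hspan : Submodule.span ℂ ((C1space V W).mkQ '' X) = ⊤)
    (s : ℤ) {a : V} (ha : a ∈ W.grading s) :
    a ∈ Submodule.span ℂ {y | y ∈ (X ∪ C1genSet W) ∧ y ∈ W.grading s} := by
  have hY : ∀ y ∈ (X ∪ C1genSet W), ∃ j, y ∈ W.grading j := by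
    rintro y (hy | hy)
    · exact hhom' y hy
    · exact C1gen_homog W y hy
  have hmem : a ∈ Submodule.span ℂ (X ∪ C1genSet W) := by
    rw [top_union W X hspan]; trivial
  have := proj_span_mem W hY s hmem
  rwa [gProj_of_mem W ha s, if_pos rfl] at this

/-! ### The linear substitution map -/

def modeAt (c : ℤ) (w : V) : V →ₗ[ℂ] V where
  toFun g := W.mode g c w
  map_add' g h := by
    show W.mode (g + h) c w = _
    rw [map_add]
    rfl
  map_smul' r g := by
    show W.mode (r • g) c w = _
    rw [map_smul]
    rfl

def psiMap (A : List (KLEntry V)) (c : ℤ) (w : V) : V →ₗ[ℂ] V :=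
  (mEnd W A) ∘ₗ (modeAt W c w)

lemma psiMap_apply (A : List (KLEntry V)) (s c : ℤ) (B : List (KLEntry V)) (g : V) :
    psiMap W A c (mEval W B) g = mEval W (A ++ (g, s, c) :: B) := by
  rw [mEval_append]
  rfl

/-! ### Membership of sorted `X`-monomials in the spanning set -/

def TSet (W : VOA V) (X : Set V) (wt : V → ℤ) : Set V :=
  { x | ∃ L : List (V × ℤ),
      (∀ p ∈ L, p.1 ∈ X) ∧
      L.Chain' (fun p q => wt q.1 - q.2 - 1 ≤ wt p.1 - p.2 - 1) ∧
      (∀ p ∈ L, 0 < wt p.1 - p.2 - 1) ∧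
      x = applyModes V W.toVertexAlg L W.vac }

lemma vac_mem_TSet (X : Set V) (wt : V → ℤ) : W.vac ∈ TSet W X wt :=
  ⟨[], by simp, List.isChain_nil, by simp, rfl⟩

lemma good_mem (X : Set V) (wt : V → ℤ)
    (hhom : ∀ u ∈ X, u ∈ W.grading (wt u)) (L : List (KLEntry V))
    (hX : ∀ p ∈ L, p.1 ∈ X) (hmem : ∀ p ∈ L, p.1 ∈ W.grading p.2.1)
    (hnz : ∀ p ∈ L, p.1 ≠ 0)
    (hch : L.Chain' (fun p q => mwtE q ≤ mwtE p)) (hpos : ∀ p ∈ L, 1 ≤ mwtE p) :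
    mEval W L ∈ TSet W X wt := by
  have hwt : ∀ p ∈ L, wt p.1 = p.2.1 := by
    intro p hp
    by_contra hne
    exact hnz p hp (grading_unique W (hhom p.1 (hX p hp)) (hmem p hp) hne)
  refine ⟨L.map (fun p => (p.1, p.2.2)), ?_, ?_, ?_, ?_⟩
  · intro q hq
    obtain ⟨p, hp, rfl⟩ := List.mem_map.mp hq
    exact hX p hp
  · show List.IsChain _ _
    rw [List.isChain_map]
    have t1 : IsTrans (KLEntry V) (fun p q : KLEntry V => mwtE q ≤ mwtE p) :=
      ⟨fun a b c hab hbc => le_trans hbc hab⟩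
    have hpw := (List.isChain_iff_pairwise (R := fun p q : KLEntry V => mwtE q ≤ mwtE p) (l := L)).mp hch
    have hpw2 : L.Pairwise (fun p q => wt q.1 - q.2.2 - 1 ≤ wt p.1 - p.2.2 - 1) := by
      refine hpw.imp_of_mem ?_
      intro p q hp hq h
      have e1 := hwt p hp
      have e2 := hwt q hq
      unfold mwtE at h
      omega
    exact hpw2.isChain
  · intro q hq
    obtain ⟨p, hp, rfl⟩ := List.mem_map.mp hq
    have := hpos p hp
    have e := hwt p hp
    unfold mwtE at this
    simp only
    omega
  · exact (mEval_applyModes W L).symm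

/-! ### Generic list search -/

lemma exists_bad_entry {α : Type*} (Q : α → Prop) (L : List α) (h : ¬ ∀ p ∈ L, Q p) :
    ∃ A p B, L = A ++ p :: B ∧ ¬ Q p := by
  induction L with
  | nil => exact absurd (by simp) h
  | cons x L ih =>
    by_cases hx : Q x
    · have : ¬ ∀ p ∈ L, Q p := by
        intro hall
        apply h
        intro p hp
        rcases List.mem_cons.mp hp with h1 | h2
        · rw [h1]; exact hx
        · exact hall p h2
      obtain ⟨A, p, B, hL, hp⟩ := ih this
      exact ⟨x :: A, p, B, by rw [hL]; rfl, hp⟩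
    · exact ⟨[], x, L, rfl, hx⟩

lemma five_pow_add {a b : ℕ} (ha : 1 ≤ a) (hb : 1 ≤ b) : 5 ^ a + 5 ^ b < 5 ^ (a + b) := by
  have h1 : 5 ^ a ≤ 5 ^ (a + b - 1) := Nat.pow_le_pow_right (by norm_num) (by omega)
  have h2 : 5 ^ b ≤ 5 ^ (a + b - 1) := Nat.pow_le_pow_right (by norm_num) (by omega)
  have h3 : (5:ℕ) ^ (a + b) = 5 ^ (a + b - 1) * 5 := by
    rw [← pow_succ]
    congr 1
    omega
  have h4 : 1 ≤ 5 ^ (a + b - 1) := Nat.one_le_pow _ _ (by norm_num)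
  omega

/-! ### The key induction -/

theorem key_induction (X : Set V) (wt : V → ℤ)
    (hhom : ∀ u ∈ X, u ∈ W.grading (wt u))
    (hspan : Submodule.span ℂ ((C1space V W).mkQ '' X) = ⊤) :
    ∀ (aa bb cc dd : ℕ) (L : List (KLEntry V)),
      gammaM L = aa → fiveM L = bb → nxM X L = cc → invM L = dd →
      (∀ p ∈ L, p.1 ∈ W.grading p.2.1 ∧ 0 ≤ p.2.1) →
      mEval W L ∈ Submodule.span ℂ (TSet W X wt) := by
  have hhom' : ∀ y ∈ X, ∃ j, y ∈ W.grading j := fun y hy => ⟨wt y, hhom y hy⟩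
  have t1 : IsTrans (KLEntry V) (fun p q : KLEntry V => mwtE q ≤ mwtE p) :=
    ⟨fun a b c hab hbc => le_trans hbc hab⟩
  intro aa
  induction aa using Nat.strong_induction_on with
  | _ aa IH1 =>
  intro bb
  induction bb using Nat.strong_induction_on with
  | _ bb IH2 =>
  intro cc
  induction cc using Nat.strong_induction_on with
  | _ cc IH3 =>
  intro dd
  induction dd using Nat.strong_induction_on with
  | _ dd IH4 =>
  intro L hga hfi hnx hinv hL
  by_cases hz : ∃ p ∈ L, p.1 = 0
  · rw [mEval_zero_entry W L hz]
    exact Submodule.zero_mem _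
  push_neg at hz
  -- Case 1: an adjacent inversion exists: swap it.
  by_cases hsorted : L.Chain' (fun p q => mwtE q ≤ mwtE p)
  case neg =>
    obtain ⟨A, p, q, B, hLeq, hpq⟩ := exists_bad_pair L hsorted
    subst hLeq
    have hpmem : p ∈ A ++ p :: q :: B := by simp
    have hqmem : q ∈ A ++ p :: q :: B := by simp
    obtain ⟨hpg, hpg0⟩ := hL p hpmem
    obtain ⟨hqg, hqg0⟩ := hL q hqmem
    set w := mEval W B with hw
    have hc := comm_formula W p.1 q.1 w p.2.2 q.2.2
    simp only [zero_add] at hc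
    set F : ℕ → V := fun i => zchoose p.2.2 i •
      W.mode (W.mode p.1 i q.1) (p.2.2 + q.2.2 - i) w with hF
    have hFfin : (Function.support F).Finite := by
      obtain ⟨N, hN⟩ := mode_shift_bound W p.1 q.1 0
      apply support_finite_of_bound N
      intro i hi
      have := hN i hi
      rw [zero_add] at this
      rw [hF]
      simp only [this, map_zero, Pi.zero_apply, LinearMap.zero_apply, smul_zero]
    have hval : mEval W (A ++ p :: q :: B)
        = mEval W (A ++ q :: p :: B) + ∑ᶠ i : ℕ, mEnd W A (F i) := by
      rw [mEval_append]
      show mEnd W A (W.mode p.1 p.2.2 (W.mode q.1 q.2.2 w)) = _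
      rw [hc, map_add]
      congr 1
      · rw [mEval_append]
        rfl
      · exact ((mEnd W A).toAddMonoidHom.map_finsum hFfin)
    rw [hval]
    apply Submodule.add_mem
    · -- swapped main term
      have hswap := invM_swap A p q B hpq
      refine IH4 (invM (A ++ q :: p :: B)) (by omega) (A ++ q :: p :: B) ?_ ?_ ?_ rfl ?_
      · rw [← hga, gammaM_append, gammaM_append]
        simp only [gammaM_cons]
        omega
      · rw [← hfi, fiveM_append, fiveM_append]
        simp only [fiveM_cons]
        omega
      · rw [← hnx, nxM_append, nxM_append, nxM_cons, nxM_cons, nxM_cons, nxM_cons]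
        omega
      · intro r hr
        apply hL
        simp only [List.mem_append, List.mem_cons] at hr ⊢
        tauto
    · -- correction terms
      apply finsum_mem_submodule
      intro i
      have hEnt : W.mode p.1 i q.1 ∈ W.grading (p.2.1 + q.2.1 - i - 1) := by
        have := mode_mem_grading W hpg hqg (i : ℤ)
        exact this
      by_cases hs' : 0 ≤ p.2.1 + q.2.1 - (i:ℤ) - 1
      · have : mEnd W A (F i) = zchoose p.2.2 i •
            mEval W (A ++ (W.mode p.1 i q.1, p.2.1 + q.2.1 - i - 1, p.2.2 + q.2.2 - i) :: B) := by
          rw [hF, map_zsmul, mEval_append]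
          rfl
        rw [this]
        apply zsmul_mem
        refine IH1 (gammaM (A ++ (W.mode p.1 i q.1, p.2.1 + q.2.1 - i - 1, p.2.2 + q.2.2 - i) :: B))
          ?_ (fiveM _) (nxM X _) (invM _) _ rfl rfl rfl rfl ?_
        · rw [← hga, gammaM_append, gammaM_append]
          simp only [gammaM_cons, entry_snd_fst]
          have : (p.2.1 + q.2.1 - (i:ℤ) - 1).toNat < p.2.1.toNat + q.2.1.toNat := by omega
          omega
        · intro r hr
          rcases List.mem_append.mp hr with h1 | h2
          · exact hL r (by simp [h1])
          · rcases List.mem_cons.mp h2 with h3 | h4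
            · subst h3
              exact ⟨hEnt, hs'⟩
            · exact hL r (by simp [h4])
      · -- the new entry is zero
        have hzero : W.mode p.1 i q.1 = 0 := by
          have hbot : W.grading (p.2.1 + q.2.1 - (i:ℤ) - 1) = ⊥ :=
            W.neg_bot _ (by omega)
          rw [hbot] at hEnt
          simpa using hEnt
        have : mEnd W A (F i) = 0 := by
          rw [hF]
          simp only [hzero, map_zero, Pi.zero_apply, LinearMap.zero_apply, smul_zero]
        rw [this]
        exact Submodule.zero_mem _
  case pos =>
  -- Case 2: a recorded-grading-zero entry
  by_cases hzg : ∀ p ∈ L, p.2.1 ≠ 0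
  case neg =>
    obtain ⟨A, p, B, hLeq, hp0⟩ := exists_bad_entry (fun p : KLEntry V => p.2.1 ≠ 0) L hzg
    push_neg at hp0
    subst hLeq
    have hpmem : p ∈ A ++ p :: B := by simp
    obtain ⟨hpg, _⟩ := hL p hpmem
    rw [hp0, W.cft] at hpg
    obtain ⟨α, hα⟩ := Submodule.mem_span_singleton.mp hpg
    have hval : mEval W (A ++ p :: B)
        = mEnd W A (W.mode p.1 p.2.2 (mEval W B)) := by
      rw [mEval_append]; rfl
    have hmode : W.mode p.1 p.2.2 (mEval W B)
        = α • (if p.2.2 = -1 then mEval W B else 0) := by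
      rw [← hα, map_smul]
      have := W.vac_mode p.2.2 (mEval W B)
      show (α • W.mode W.vac) p.2.2 (mEval W B) = _
      rw [Pi.smul_apply, LinearMap.smul_apply, this]
    by_cases hc : p.2.2 = -1
    · rw [hval, hmode, if_pos hc, map_smul, ← mEval_append]
      apply Submodule.smul_mem
      refine IH2 (fiveM (A ++ B)) ?_ (nxM X _) (invM _) _ ?_ rfl rfl rfl ?_
      · rw [← hfi, fiveM_append, fiveM_append, fiveM_cons]
        have : 1 ≤ 5 ^ p.2.1.toNat := Nat.one_le_pow _ _ (by norm_num)
        omega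
      · rw [← hga, gammaM_append, gammaM_append, gammaM_cons, hp0]
        omega
      · intro r hr
        apply hL
        simp only [List.mem_append, List.mem_cons] at hr ⊢
        tauto
    · rw [hval, hmode, if_neg hc]
      simp only [smul_zero, map_zero]
      exact Submodule.zero_mem _
  case pos =>
  -- Now every entry has recorded grading ≥ 1.
  have hge1 : ∀ p ∈ L, 1 ≤ p.2.1 := by
    intro p hp
    have := (hL p hp).2
    have := hzg p hp
    omega
  rcases List.eq_nil_or_concat L with hnil | ⟨A', pl, hconcat⟩
  · subst hnil
    exact Submodule.subset_span (vac_mem_TSet W X wt)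
  rw [List.concat_eq_append] at hconcat
  -- Case 3: last entry has nonpositive mode weight
  by_cases hlast : mwtE pl ≤ 0
  · subst hconcat
    have hplg := hge1 pl (by simp)
    have hval : mEval W (A' ++ [pl]) = mEnd W A' (W.mode pl.1 pl.2.2 W.vac) := by
      rw [mEval_append]; rfl
    have : W.mode pl.1 pl.2.2 W.vac = 0 := by
      apply W.creation_nonneg
      unfold mwtE at hlast
      omega
    rw [hval, this, map_zero]
    exact Submodule.zero_mem _
  -- Case 4: all mode weights ≥ 1
  have hpos : ∀ p ∈ L, 1 ≤ mwtE p := by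
    have hpw := (List.isChain_iff_pairwise (R := fun p q : KLEntry V => mwtE q ≤ mwtE p) (l := L)).mp hsorted
    rw [hconcat] at hpw
    obtain ⟨_, _, hrel⟩ := List.pairwise_append.mp hpw
    intro r hr
    rw [hconcat] at hr
    rcases List.mem_append.mp hr with h1 | h2
    · have := hrel r h1 pl (by simp)
      omega
    · have : r = pl := by simpa using h2
      subst this
      omega
  by_cases hallX : ∀ p ∈ L, p.1 ∈ X
  · exact Submodule.subset_span
      (good_mem W X wt hhom L hallX (fun p hp => (hL p hp).1) hz hsorted hpos)
  -- Case 5: replace a non-X entry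
  obtain ⟨A, p, B, hLeq, hpX⟩ := exists_bad_entry (fun p : KLEntry V => p.1 ∈ X) L hallX
  subst hLeq
  have hpmem : p ∈ A ++ p :: B := by simp
  obtain ⟨hpg, hpg0⟩ := hL p hpmem
  have hps1 : 1 ≤ p.2.1 := hge1 p hpmem
  have hsplit := top_split W X hhom' hspan p.2.1 hpg
  set Ψ := psiMap W A p.2.2 (mEval W B) with hΨdef
  have hgoal : mEval W (A ++ p :: B) = Ψ p.1 := by
    rw [hΨdef, psiMap_apply W A p.2.1 p.2.2 B p.1]
  rw [hgoal]
  have hle : Submodule.span ℂ {y | y ∈ (X ∪ C1genSet W) ∧ y ∈ W.grading p.2.1}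
      ≤ (Submodule.span ℂ (TSet W X wt)).comap Ψ := by
    rw [Submodule.span_le]
    rintro y ⟨hyu, hyg⟩
    simp only [SetLike.mem_coe, Submodule.mem_comap]
    by_cases hy0 : y = 0
    · rw [hy0, map_zero]
      exact Submodule.zero_mem _
    have hΨy : ∀ (s : ℤ), Ψ y = mEval W (A ++ (y, s, p.2.2) :: B) := by
      intro s
      rw [hΨdef, psiMap_apply W A s p.2.2 B y]
    rcases hyu with hyX | hyC
    · -- X replacement
      rw [hΨy p.2.1]
      refine IH3 (nxM X (A ++ (y, p.2.1, p.2.2) :: B)) ?_ (invM _) _ ?_ ?_ rfl rfl ?_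
      · rw [← hnx, nxM_append, nxM_append, nxM_cons, nxM_cons]
        rw [if_pos hpX, if_neg (by simpa using hyX)]
        omega
      · rw [← hga, gammaM_append, gammaM_append, gammaM_cons, gammaM_cons]
      · rw [← hfi, fiveM_append, fiveM_append, fiveM_cons, fiveM_cons]
      · intro r hr
        rcases List.mem_append.mp hr with h1 | h2
        · exact hL r (by simp [h1])
        · rcases List.mem_cons.mp h2 with h3 | h4
          · subst h3
            exact ⟨hyg, show (0:ℤ) ≤ p.2.1 by omega⟩
          · exact hL r (by simp [h4])
    · rcases hyC with ⟨u, v, ⟨r, hr, hu⟩, ⟨r', hr', hv⟩, hyeq⟩ | ⟨u, ⟨r, hr, hu⟩, hyeq⟩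
      · -- u_{-1}v replacement
        have hymem : y ∈ W.grading (r + r') := by
          have := mode_mem_grading W hu hv (-1)
          have e : r + r' - (-1) - 1 = r + r' := by ring
          rw [e] at this
          rw [hyeq]
          exact this
        have hs : p.2.1 = r + r' := by
          by_contra hne
          exact hy0 (grading_unique W hyg hymem (fun h => hne h))
        rw [hΨy p.2.1, hyeq]
        have hit := iterate_formula W u v (mEval W B) p.2.2
        set F1 : ℕ → V := fun i => W.mode u (-1 - i) (W.mode v (p.2.2 + i) (mEval W B)) with hF1
        set F2 : ℕ → V := fun i => W.mode v (p.2.2 - 1 - i) (W.mode u i (mEval W B)) with hF2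
        have hf1 : (Function.support F1).Finite := by
          obtain ⟨N, hN⟩ := mode_shift_bound W v (mEval W B) p.2.2
          apply support_finite_of_bound N
          intro i hi
          rw [hF1]
          simp only [hN i hi, map_zero]
        have hf2 : (Function.support F2).Finite := by
          obtain ⟨N, hN⟩ := mode_shift_bound W u (mEval W B) 0
          apply support_finite_of_bound N
          intro i hi
          have := hN i hi
          rw [zero_add] at this
          rw [hF2]
          simp only [this, map_zero]
        have hval2 : mEval W (A ++ (W.mode u (-1) v, p.2.1, p.2.2) :: B)
            = (∑ᶠ i : ℕ, mEnd W A (F1 i)) + ∑ᶠ i : ℕ, mEnd W A (F2 i) := by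
          rw [mEval_append]
          show mEnd W A (W.mode (W.mode u (-1) v) p.2.2 (mEval W B)) = _
          rw [hit, map_add]
          congr 1
          · exact ((mEnd W A).toAddMonoidHom.map_finsum hf1)
          · exact ((mEnd W A).toAddMonoidHom.map_finsum hf2)
        rw [hval2]
        have hmemnew : ∀ (e1 e2 : KLEntry V), e1.1 ∈ W.grading e1.2.1 → 0 ≤ e1.2.1 →
            e2.1 ∈ W.grading e2.2.1 → 0 ≤ e2.2.1 →
            ∀ r' ∈ A ++ e1 :: e2 :: B, r'.1 ∈ W.grading r'.2.1 ∧ 0 ≤ r'.2.1 := by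
          intro e1 e2 h1 h2 h3 h4 r' hr'
          rcases List.mem_append.mp hr' with ha | hb
          · exact hL r' (by simp [ha])
          · rcases List.mem_cons.mp hb with hc | hd
            · subst hc; exact ⟨h1, h2⟩
            · rcases List.mem_cons.mp hd with hc | he
              · subst hc; exact ⟨h3, h4⟩
              · exact hL r' (by simp [he])
        have hγ : ∀ (x1 x2 : V) (c1 c2 : ℤ),
            gammaM (A ++ (x1, r, c1) :: (x2, r', c2) :: B) = aa := by
          intro x1 x2 c1 c2
          rw [← hga, gammaM_append, gammaM_append]
          simp only [gammaM_cons, entry_snd_fst]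
          have : p.2.1.toNat = r.toNat + r'.toNat := by omega
          omega
        have hφ : ∀ (x1 x2 : V) (c1 c2 : ℤ),
            fiveM (A ++ (x1, r, c1) :: (x2, r', c2) :: B) < bb := by
          intro x1 x2 c1 c2
          rw [← hfi, fiveM_append, fiveM_append]
          simp only [fiveM_cons, entry_snd_fst]
          have h5 : 5 ^ r.toNat + 5 ^ r'.toNat < 5 ^ p.2.1.toNat := by
            have e : p.2.1.toNat = r.toNat + r'.toNat := by omega
            rw [e]
            exact five_pow_add (by omega) (by omega)
          omega
        apply Submodule.add_mem
        · apply finsum_mem_submodule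
          intro i
          have : mEnd W A (F1 i) = mEval W (A ++ (u, r, -1 - (i:ℤ)) :: (v, r', p.2.2 + (i:ℤ)) :: B) := by
            rw [hF1, mEval_append]
            rfl
          rw [this]
          exact IH2 _ (hφ u v _ _) (nxM X _) (invM _) _ (hγ u v _ _) rfl rfl rfl
            (hmemnew (u, r, -1 - (i:ℤ)) (v, r', p.2.2 + (i:ℤ)) hu (show (0:ℤ) ≤ r by omega)
              hv (show (0:ℤ) ≤ r' by omega))
        · apply finsum_mem_submodule
          intro i
          have : mEnd W A (F2 i) = mEval W (A ++ (v, r', p.2.2 - 1 - (i:ℤ)) :: (u, r, (i:ℤ)) :: B) := by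
            rw [hF2, mEval_append]
            rfl
          rw [this]
          have hγ2 : gammaM (A ++ (v, r', p.2.2 - 1 - (i:ℤ)) :: (u, r, (i:ℤ)) :: B) = aa := by
            rw [← hga, gammaM_append, gammaM_append]
            simp only [gammaM_cons, entry_snd_fst]
            have : p.2.1.toNat = r.toNat + r'.toNat := by omega
            omega
          have hφ2 : fiveM (A ++ (v, r', p.2.2 - 1 - (i:ℤ)) :: (u, r, (i:ℤ)) :: B) < bb := by
            rw [← hfi, fiveM_append, fiveM_append]
            simp only [fiveM_cons, entry_snd_fst]
            have h5 : 5 ^ r'.toNat + 5 ^ r.toNat < 5 ^ p.2.1.toNat := by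
              have e : p.2.1.toNat = r'.toNat + r.toNat := by omega
              rw [e]
              exact five_pow_add (by omega) (by omega)
            omega
          exact IH2 _ hφ2 (nxM X _) (invM _) _ hγ2 rfl rfl rfl
            (hmemnew (v, r', p.2.2 - 1 - (i:ℤ)) (u, r, (i:ℤ)) hv (show (0:ℤ) ≤ r' by omega)
              hu (show (0:ℤ) ≤ r by omega))
      · -- L(-1) replacement
        have hymem : y ∈ W.grading (r + 1) := by
          have := mode_mem_grading W W.ω_grade hu 0
          have e : 2 + r - 0 - 1 = r + 1 := by ring
          rw [e] at this
          rw [hyeq]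
          exact this
        have hs : p.2.1 = r + 1 := by
          by_contra hne
          exact hy0 (grading_unique W hyg hymem (fun h => hne h))
        rw [hΨy p.2.1, hyeq]
        have hval3 : mEval W (A ++ (W.mode W.ω 0 u, p.2.1, p.2.2) :: B)
            = (-p.2.2) • mEval W (A ++ (u, r, p.2.2 - 1) :: B) := by
          rw [mEval_append, mEval_append]
          show mEnd W A (W.mode (W.mode W.ω 0 u) p.2.2 (mEval W B)) = _
          rw [W.Lneg1_deriv u p.2.2, LinearMap.smul_apply, map_zsmul]
          rfl
        rw [hval3]
        apply zsmul_mem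
        refine IH1 (gammaM (A ++ (u, r, p.2.2 - 1) :: B)) ?_ (fiveM _) (nxM X _) (invM _) _
          rfl rfl rfl rfl ?_
        · rw [← hga, gammaM_append, gammaM_append, gammaM_cons, gammaM_cons]
          simp only [entry_snd_fst]
          have : r.toNat < p.2.1.toNat := by omega
          omega
        · intro r' hr'
          rcases List.mem_append.mp hr' with h1 | h2
          · exact hL r' (by simp [h1])
          · rcases List.mem_cons.mp h2 with h3 | h4
            · subst h3
              exact ⟨hu, show (0:ℤ) ≤ r by omega⟩
            · exact hL r' (by simp [h4])
  exact hle hsplit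

/-- Every homogeneous element lies in the span of the sorted monomials. -/
lemma homog_mem_span (X : Set V) (wt : V → ℤ)
    (hhom : ∀ u ∈ X, u ∈ W.grading (wt u))
    (hspan : Submodule.span ℂ ((C1space V W).mkQ '' X) = ⊤)
    (j : ℤ) (x : V) (hx : x ∈ W.grading j) :
    x ∈ Submodule.span ℂ (TSet W X wt) := by
  by_cases hj : 0 ≤ j
  · have hkey := key_induction W X wt hhom hspan (gammaM [(x, j, -1)]) (fiveM [(x, j, -1)])
      (nxM X [(x, j, -1)]) (invM [(x, j, -1)]) [(x, j, -1)] rfl rfl rfl rfl ?_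
    · have : mEval W [(x, j, -1)] = x := by
        show W.mode x (-1) W.vac = x
        exact W.creation_neg_one x
      rwa [this] at hkey
    · intro p hp
      have : p = (x, j, -1) := by simpa using hp
      subst this
      exact ⟨hx, hj⟩
  · have hx0 : x = 0 := by
      rw [W.neg_bot j (by omega)] at hx
      simpa using hx
    rw [hx0]
    exact Submodule.zero_mem _

set_option synthInstance.maxHeartbeats 1000000 in
theorem span_TSet_top (X : Set V) (wt : V → ℤ)
    (hhom : ∀ u ∈ X, u ∈ W.grading (wt u))
    (hspan : Submodule.span ℂ ((C1space V W).mkQ '' X) = ⊤) :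
    Submodule.span ℂ (TSet W X wt) = ⊤ := by
  apply le_antisymm le_top
  intro v _
  have hv : v = (gEquiv W) ((gEquiv W).symm v) := ((gEquiv W).apply_symm_apply v).symm
  rw [hv]
  generalize ((gEquiv W).symm v) = f
  induction f using DFinsupp.induction with
  | h0 =>
    rw [map_zero]
    exact Submodule.zero_mem _
  | ha j b f _ _ ih =>
    rw [map_add]
    refine Submodule.add_mem _ ?_ ih
    have hsingle : (gEquiv W) (DFinsupp.single j b) = (b : V) := by
      have : (DFinsupp.single j b : ⨁ i : ℤ, W.grading i)
          = DirectSum.lof ℂ ℤ (fun i => W.grading i) j b := rfl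
      rw [this, gEquiv_lof]
    rw [hsingle]
    exact homog_mem_span W X wt hhom hspan j (b : V) b.2

end KLProof
/-- Karel–Li: representatives of a spanning set of `V/C_1(V)` span `V` via
elements `u¹_{n₁} ⋯ uʳ_{nᵣ} 1` with `wt(u¹_{n₁}) ≥ ⋯ ≥ wt(uʳ_{nᵣ}) > 0`. -/
theorem stmt7 (W : VOA V) (X : Set V) (wt : V → ℤ)
    (hhom : ∀ u ∈ X, u ∈ W.grading (wt u))
    (hspan : Submodule.span ℂ ((C1space V W).mkQ '' X) = ⊤) :
    Submodule.span ℂ { x | ∃ L : List (V × ℤ),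
      (∀ p ∈ L, p.1 ∈ X) ∧
      L.Chain' (fun p q => wt q.1 - q.2 - 1 ≤ wt p.1 - p.2 - 1) ∧
      (∀ p ∈ L, 0 < wt p.1 - p.2 - 1) ∧
      x = applyModes V W.toVertexAlg L W.vac } = (⊤ : Submodule ℂ V) := by
  exact span_TSet_top W X wt hhom hspan

end VOAPaper
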